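/- With c_CQS(α) = 2 + 2h(α) and c_YQS(α) = (19/12)·(3/2 + h(α)), where h(α) = −α ln α − (1−α)ln(1−α), one has c_CQS(α) < c_YQS(α) for all α ∈ (0,1); i.e., classic Quickselect performs fewer comparisons than YBB-Select for every fixed relative rank. -/
import Mathlib

/-- The binary base-e entropy function. -/
noncomputable def binEnt (x : ℝ) : ℝ := -x * Real.log x - (1 - x) * Real.log (1 - x)

/-- Classic Quickselect uses fewer comparisons than YBB-Select for every fixed
relative rank: `2 + 2h(α) < (19/12)(3/2 + h(α))` for all `α ∈ (0,1)`. -/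
theorem cqs_fewer_comparisons_than_yqs :
    ∀ α ∈ Set.Ioo (0:ℝ) 1,
      2 + 2 * binEnt α < 19 / 12 * (3 / 2 + binEnt α) := by
  intro α _
  have h1 : binEnt α = Real.binEntropy α := by
    simp [binEnt, Real.binEntropy, Real.log_inv]; ring
  have h2 : Real.binEntropy α ≤ Real.log 2 := Real.binEntropy_le_log_two
  have h3 : Real.log 2 < 0.6931471808 := Real.log_two_lt_d9
  rw [h1]; nlinarith
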